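/- Let k ≥ 2 be a fixed integer, let Ω = {(x,y) ∈ ℝ² : 0 ≤ x ≤ y ≤ 1}, and let P ⊆ Ω be the convex hull of a finite set of points of Ω. For n ∈ ℕ let V_{n,k}(P) = {X ⊆ {0,1,...,n} : |X| = k and (min(X)/n, max(X)/n) ∈ P}. Then |V_{n,k}(P)| / n^k → (1/(k-2)!) ∬_P (y-x)^{k-2} dx dy as n → ∞. -/

import Mathlib

open MeasureTheory

/-- The maximum element of a finite set of naturals (`0` for the empty set). -/
def fmax (X : Finset ℕ) : ℕ := WithBot.unbotD 0 X.max

/-- The minimum element of a finite set of naturals (`0` for the empty set). -/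
def fmin (X : Finset ℕ) : ℕ := WithTop.untopD 0 X.min

open Finset Metric
open scoped Classical
open scoped ENNReal

lemma fmin_eq_min' {X : Finset ℕ} (hX : X.Nonempty) : fmin X = X.min' hX := by
  rw [fmin, ← Finset.coe_min' hX]; rfl

lemma fmax_eq_max' {X : Finset ℕ} (hX : X.Nonempty) : fmax X = X.max' hX := by
  rw [fmax, ← Finset.coe_max' hX]; rfl

lemma fmin_mem {X : Finset ℕ} (hX : X.Nonempty) : fmin X ∈ X := by
  rw [fmin_eq_min' hX]; exact X.min'_mem hX

lemma fmax_mem {X : Finset ℕ} (hX : X.Nonempty) : fmax X ∈ X := by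
  rw [fmax_eq_max' hX]; exact X.max'_mem hX

lemma fmin_le {X : Finset ℕ} {x : ℕ} (hx : x ∈ X) : fmin X ≤ x := by
  rw [fmin_eq_min' ⟨x, hx⟩]; exact X.min'_le x hx

lemma le_fmax {X : Finset ℕ} {x : ℕ} (hx : x ∈ X) : x ≤ fmax X := by
  rw [fmax_eq_max' ⟨x, hx⟩]; exact X.le_max' x hx

lemma fmin_eq_of {X : Finset ℕ} {a : ℕ} (ha : a ∈ X) (h : ∀ x ∈ X, a ≤ x) : fmin X = a :=
  le_antisymm (fmin_le ha) (h _ (fmin_mem ⟨a, ha⟩))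

lemma fmax_eq_of {X : Finset ℕ} {a : ℕ} (ha : a ∈ X) (h : ∀ x ∈ X, x ≤ a) : fmax X = a :=
  le_antisymm (h _ (fmax_mem ⟨a, ha⟩)) (le_fmax ha)

lemma card_fiber (n k a b : ℕ) (hk : 2 ≤ k) (hab : a < b) (hb : b ≤ n) :
    ((Finset.range (n+1)).powerset.filter
      (fun X : Finset ℕ => X.card = k ∧ fmin X = a ∧ fmax X = b)).card
    = (b - a - 1).choose (k - 2) := by
  rw [← Nat.card_Ioo, ← Finset.card_powersetCard]
  apply Finset.card_bij' (fun X _ => (X.erase a).erase b) (fun Y _ => insert a (insert b Y))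
  · intro X hX
    simp only [Finset.mem_filter, Finset.mem_powerset] at hX
    obtain ⟨hsub, hcard, hmin, hmax⟩ := hX
    have hXne : X.Nonempty := Finset.card_pos.mp (by omega)
    have haX : a ∈ X := hmin ▸ fmin_mem hXne
    have hbX : b ∈ X := hmax ▸ fmax_mem hXne
    have hba : b ∈ X.erase a := Finset.mem_erase.mpr ⟨by omega, hbX⟩
    rw [Finset.insert_erase hba, Finset.insert_erase haX]
  · intro Y hY
    rw [Finset.mem_powersetCard] at hY
    obtain ⟨hsub, hcard⟩ := hY
    have haY : a ∉ Y := fun h => by have := Finset.mem_Ioo.mp (hsub h); omega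
    have hbY : b ∉ Y := fun h => by have := Finset.mem_Ioo.mp (hsub h); omega
    have habY : a ∉ insert b Y := by
      simp only [Finset.mem_insert]; push_neg; exact ⟨by omega, haY⟩
    rw [Finset.erase_insert habY, Finset.erase_insert hbY]
  · intro X hX
    simp only [Finset.mem_filter, Finset.mem_powerset] at hX
    obtain ⟨hsub, hcard, hmin, hmax⟩ := hX
    have hXne : X.Nonempty := Finset.card_pos.mp (by omega)
    have haX : a ∈ X := hmin ▸ fmin_mem hXne
    have hbX : b ∈ X := hmax ▸ fmax_mem hXne
    rw [Finset.mem_powersetCard]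
    constructor
    · intro x hx
      simp only [Finset.mem_erase] at hx
      obtain ⟨hxb, hxa, hxX⟩ := hx
      have h1 : a ≤ x := hmin ▸ fmin_le hxX
      have h2 : x ≤ b := hmax ▸ le_fmax hxX
      exact Finset.mem_Ioo.mpr ⟨lt_of_le_of_ne h1 (Ne.symm hxa), lt_of_le_of_ne h2 hxb⟩
    · have hba : b ∈ X.erase a := Finset.mem_erase.mpr ⟨by omega, hbX⟩
      rw [Finset.card_erase_of_mem hba, Finset.card_erase_of_mem haX, hcard]; omega
  · intro Y hY
    rw [Finset.mem_powersetCard] at hY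
    obtain ⟨hsub, hcard⟩ := hY
    have haY : a ∉ Y := fun h => by have := Finset.mem_Ioo.mp (hsub h); omega
    have hbY : b ∉ Y := fun h => by have := Finset.mem_Ioo.mp (hsub h); omega
    have habY : a ∉ insert b Y := by
      simp only [Finset.mem_insert]; push_neg; exact ⟨by omega, haY⟩
    simp only [Finset.mem_filter, Finset.mem_powerset]
    refine ⟨?_, ?_, ?_, ?_⟩
    · intro x hx
      simp only [Finset.mem_insert] at hx
      rcases hx with rfl | rfl | hx
      · exact Finset.mem_range.mpr (by omega)
      · exact Finset.mem_range.mpr (by omega)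
      · have := Finset.mem_Ioo.mp (hsub hx); exact Finset.mem_range.mpr (by omega)
    · rw [Finset.card_insert_of_notMem habY, Finset.card_insert_of_notMem hbY, hcard]; omega
    · apply fmin_eq_of (Finset.mem_insert_self a _)
      intro x hx
      simp only [Finset.mem_insert] at hx
      rcases hx with rfl | rfl | hx
      · exact le_rfl
      · omega
      · have := Finset.mem_Ioo.mp (hsub hx); omega
    · apply fmax_eq_of
      · exact Finset.mem_insert_of_mem (Finset.mem_insert_self b _)
      · intro x hx
        simp only [Finset.mem_insert] at hx
        rcases hx with rfl | rfl | hx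
        · omega
        · exact le_rfl
        · have := Finset.mem_Ioo.mp (hsub hx); omega

lemma count_eq (P : Set (ℝ × ℝ)) (n k : ℕ) (hk : 2 ≤ k) :
    ((Finset.range (n+1)).powerset.filter
      (fun X : Finset ℕ => X.card = k ∧ ((fmin X : ℝ)/(n:ℝ), (fmax X : ℝ)/(n:ℝ)) ∈ P)).card
    = ∑ p ∈ (Finset.range (n+1)) ×ˢ (Finset.range (n+1)),
        if ((p.1 : ℝ)/(n:ℝ), (p.2 : ℝ)/(n:ℝ)) ∈ P ∧ p.1 < p.2
        then (p.2 - p.1 - 1).choose (k - 2) else 0 := by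
  rw [Finset.card_eq_sum_card_fiberwise
    (f := fun X : Finset ℕ => (fmin X, fmax X))
    (t := (Finset.range (n+1)) ×ˢ (Finset.range (n+1)))]
  · apply Finset.sum_congr rfl
    rintro ⟨a, b⟩ hp
    simp only [Finset.mem_product, Finset.mem_range] at hp
    by_cases hmem : ((a : ℝ)/(n:ℝ), (b : ℝ)/(n:ℝ)) ∈ P ∧ a < b
    · rw [if_pos hmem, ← card_fiber n k a b hk hmem.2 (by omega)]
      congr 1
      ext X
      simp only [Finset.mem_filter, Finset.mem_powerset, Prod.mk.injEq]
      constructor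
      · rintro ⟨⟨h1, h2, h3⟩, h4, h5⟩; exact ⟨h1, h2, h4, h5⟩
      · rintro ⟨h1, h2, h4, h5⟩
        exact ⟨⟨h1, h2, by rw [h4, h5]; exact hmem.1⟩, h4, h5⟩
    · rw [if_neg hmem, Finset.card_eq_zero]
      rw [Finset.eq_empty_iff_forall_notMem]
      rintro X hX
      simp only [Finset.mem_filter, Finset.mem_powerset, Prod.mk.injEq] at hX
      obtain ⟨⟨hsub, hcard, hPm⟩, h4, h5⟩ := hX
      have hXne : X.Nonempty := Finset.card_pos.mp (by omega)
      have hab : a ≤ b := by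
        rw [← h4, ← h5]; exact fmin_le (fmax_mem hXne)
      rw [h4, h5] at hPm
      rcases eq_or_lt_of_le hab with rfl | hlt
      · -- a = b : X = {a}, card 1 ≠ k
        have : X ⊆ {a} := by
          intro x hx
          have h1 : a ≤ x := h4 ▸ fmin_le hx
          have h2 : x ≤ a := h5 ▸ le_fmax hx
          simp only [Finset.mem_singleton]; omega
        have := Finset.card_le_card this
        simp only [Finset.card_singleton] at this
        omega
      · exact hmem ⟨hPm, hlt⟩
  · intro X hX
    simp only [Finset.mem_coe, Finset.mem_filter, Finset.mem_powerset] at hX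
    obtain ⟨hsub, hcard, _⟩ := hX
    have hXne : X.Nonempty := Finset.card_pos.mp (by omega)
    simp only [Finset.mem_coe, Finset.mem_product]
    exact ⟨hsub (fmin_mem hXne), hsub (fmax_mem hXne)⟩



lemma desc_le_pow (j : ℕ) : ∀ d : ℕ, (d-1).descFactorial j ≤ d^j := by
  induction j with
  | zero => intro d; simp
  | succ j ih =>
    intro d
    rw [Nat.descFactorial_succ, pow_succ']
    exact Nat.mul_le_mul (by omega) (ih d)

lemma pow_le_desc_add (j : ℕ) : ∀ d : ℕ, 1 ≤ d →
    d^j ≤ (d-1).descFactorial j + j*j*d^(j-1) := by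
  induction j with
  | zero => intro d _; simp
  | succ j ih =>
    intro d hd
    have ihd := ih d hd
    have h4 := desc_le_pow j d
    have h5 : j*j*(d*d^(j-1)) ≤ j*j*d^j := by
      rcases Nat.eq_zero_or_pos j with rfl | hj
      · simp
      · have hdd : d*d^(j-1) = d^j := by
          conv_rhs => rw [← Nat.succ_pred_eq_of_pos hj]
          rw [pow_succ', Nat.pred_eq_sub_one]
        rw [hdd]
    have key : d * ((d-1).descFactorial j) ≤ (d-1).descFactorial (j+1) + (j+1) * d^j := by
      rw [Nat.descFactorial_succ]
      calc d * ((d-1).descFactorial j)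
          ≤ ((d-1-j) + (j+1)) * ((d-1).descFactorial j) :=
            Nat.mul_le_mul_right _ (by omega)
        _ = (d-1-j) * ((d-1).descFactorial j) + (j+1) * ((d-1).descFactorial j) := by ring
        _ ≤ (d-1-j) * ((d-1).descFactorial j) + (j+1) * d^j :=
            Nat.add_le_add_left (Nat.mul_le_mul_left _ h4) _
    have hfin : j*j + (j+1) ≤ (j+1)*(j+1) := by nlinarith
    calc d^(j+1) = d * d^j := pow_succ' d j
      _ ≤ d * ((d-1).descFactorial j + j*j*d^(j-1)) := Nat.mul_le_mul_left d ihd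
      _ = d * ((d-1).descFactorial j) + j*j*(d*d^(j-1)) := by ring
      _ ≤ ((d-1).descFactorial (j+1) + (j+1)*d^j) + j*j*d^j := Nat.add_le_add key h5
      _ = (d-1).descFactorial (j+1) + (j*j + (j+1))*d^j := by ring
      _ ≤ (d-1).descFactorial (j+1) + ((j+1)*(j+1))*d^j :=
          Nat.add_le_add_left (Nat.mul_le_mul_right _ hfin) _
      _ = (d-1).descFactorial (j+1) + (j+1)*(j+1)*d^(j+1-1) := by
          simp

lemma weight_approx {j d n : ℕ} (hd : 1 ≤ d) (hdn : d ≤ n) :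
    |((d-1).choose j : ℝ) / (n:ℝ)^j - ((d:ℝ)/(n:ℝ))^j / (Nat.factorial j : ℝ)|
      ≤ (j*j : ℝ) / ((Nat.factorial j : ℝ) * (n:ℝ)) := by
  have hn : 1 ≤ n := le_trans hd hdn
  have hn0 : (0:ℝ) < n := by exact_mod_cast hn
  have hfac0 : (0:ℝ) < (Nat.factorial j : ℝ) := by exact_mod_cast j.factorial_pos
  rcases Nat.eq_zero_or_pos j with rfl | hj
  · simp
  have hdesc : ((d-1).descFactorial j : ℝ) = (Nat.factorial j : ℝ) * ((d-1).choose j : ℝ) := by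
    exact_mod_cast congrArg (Nat.cast (R := ℝ)) (Nat.descFactorial_eq_factorial_mul_choose (d-1) j)
  have h1 : ((d-1).descFactorial j : ℝ) ≤ (d:ℝ)^j := by
    exact_mod_cast desc_le_pow j d
  have h2 : (d:ℝ)^j ≤ ((d-1).descFactorial j : ℝ) + (j*j:ℝ) * (d:ℝ)^(j-1) := by
    exact_mod_cast pow_le_desc_add j d hd
  have hchoose : ((d-1).choose j : ℝ) = ((d-1).descFactorial j : ℝ) / (Nat.factorial j : ℝ) := by
    rw [hdesc]; field_simp
  have hAeq : ((d-1).choose j : ℝ) / (n:ℝ)^j - ((d:ℝ)/(n:ℝ))^j / (Nat.factorial j : ℝ)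
      = -(((d:ℝ)^j - ((d-1).descFactorial j : ℝ)) / ((Nat.factorial j : ℝ) * (n:ℝ)^j)) := by
    rw [hchoose, div_pow]
    field_simp
    ring
  have hnum : (0:ℝ) ≤ (d:ℝ)^j - ((d-1).descFactorial j : ℝ) := sub_nonneg.mpr h1
  have hden : (0:ℝ) < (Nat.factorial j : ℝ) * (n:ℝ)^j := by positivity
  rw [hAeq, abs_neg, abs_of_nonneg (div_nonneg hnum hden.le)]
  have hdn' : (d:ℝ)^(j-1) ≤ (n:ℝ)^(j-1) := by
    apply pow_le_pow_left₀ (by positivity)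
    exact_mod_cast hdn
  have h3 : (d:ℝ)^j - ((d-1).descFactorial j : ℝ) ≤ (j*j:ℝ) * (n:ℝ)^(j-1) := by
    have := mul_le_mul_of_nonneg_left hdn' (by positivity : (0:ℝ) ≤ (j*j:ℝ))
    linarith
  have hnj : (n:ℝ)^j = (n:ℝ)^(j-1) * n := by
    conv_lhs => rw [← Nat.succ_pred_eq_of_pos hj]
    rw [pow_succ, Nat.pred_eq_sub_one]
  rw [div_le_div_iff₀ hden (by positivity)]
  calc ((d:ℝ)^j - ((d-1).descFactorial j : ℝ)) * ((Nat.factorial j : ℝ) * (n:ℝ))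
      ≤ ((j*j:ℝ) * (n:ℝ)^(j-1)) * ((Nat.factorial j : ℝ) * (n:ℝ)) :=
        mul_le_mul_of_nonneg_right h3 (by positivity)
    _ = (j*j:ℝ) * ((Nat.factorial j : ℝ) * (n:ℝ)^j) := by rw [hnj]; ring

lemma abs_f_le {j : ℕ} {q : ℝ × ℝ} (h1 : |q.2 - q.1| ≤ 1) :
    |(q.2 - q.1)^j / (Nat.factorial j : ℝ)| ≤ 1 / (Nat.factorial j : ℝ) := by
  have hfac0 : (0:ℝ) < (Nat.factorial j : ℝ) := by exact_mod_cast j.factorial_pos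
  rw [abs_div, abs_of_pos hfac0, abs_pow]
  gcongr
  exact pow_le_one₀ (abs_nonneg _) h1

lemma count_approx (k n : ℕ) (hk : 2 ≤ k) (hn : 1 ≤ n) (P : Set (ℝ × ℝ))
    (hPsub : P ⊆ {p : ℝ × ℝ | 0 ≤ p.1 ∧ p.1 ≤ p.2 ∧ p.2 ≤ 1}) :
    |(((Finset.range (n+1)).powerset.filter
        (fun X : Finset ℕ => X.card = k ∧ ((fmin X : ℝ)/(n:ℝ), (fmax X : ℝ)/(n:ℝ)) ∈ P)).card : ℝ)
        / (n:ℝ)^k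
      - (∑ p ∈ (Finset.range (n+1)) ×ˢ (Finset.range (n+1)),
          P.indicator (fun q : ℝ × ℝ => (q.2 - q.1)^(k-2) / (Nat.factorial (k-2) : ℝ))
            ((p.1:ℝ)/(n:ℝ), (p.2:ℝ)/(n:ℝ))) / (n:ℝ)^2|
    ≤ 4*((k-2)*(k-2) : ℝ)/((Nat.factorial (k-2) : ℝ) * n) + 2/(n:ℝ) := by
  set j := k - 2 with hjdef
  have hn0 : (0:ℝ) < n := by exact_mod_cast hn
  have hfac0 : (0:ℝ) < (Nat.factorial j : ℝ) := by exact_mod_cast j.factorial_pos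
  have hfac1 : (1:ℝ) ≤ (Nat.factorial j : ℝ) := by exact_mod_cast j.factorial_pos
  have hk2 : k = j + 2 := by omega
  have hjc : ((k:ℝ) - 2) = (j:ℝ) := by rw [hjdef, Nat.cast_sub hk]; norm_num
  rw [hjc, count_eq P n k hk, Nat.cast_sum, Finset.sum_div, Finset.sum_div,
    ← Finset.sum_sub_distrib]
  set F := (Finset.range (n+1)) ×ˢ (Finset.range (n+1)) with hF
  set A : ℝ := 1/(n:ℝ)^2 with hA
  set B : ℝ := (j*j:ℝ)/((Nat.factorial j : ℝ) * (n:ℝ)^2 * n) with hB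
  have hA0 : 0 ≤ A := by positivity
  have hB0 : 0 ≤ B := by positivity
  have hterm : ∀ p ∈ F,
      |((if ((p.1:ℝ)/(n:ℝ), (p.2:ℝ)/(n:ℝ)) ∈ P ∧ p.1 < p.2
          then ((p.2 - p.1 - 1).choose j) else 0 : ℕ) : ℝ)/(n:ℝ)^k
        - P.indicator (fun q : ℝ × ℝ => (q.2 - q.1)^j / (Nat.factorial j : ℝ))
            ((p.1:ℝ)/(n:ℝ), (p.2:ℝ)/(n:ℝ)) / (n:ℝ)^2|
      ≤ (if p.1 = p.2 then A else B) := by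
    rintro ⟨a, b⟩ hp
    simp only [hF, Finset.mem_product, Finset.mem_range] at hp
    by_cases hm : ((a:ℝ)/(n:ℝ), (b:ℝ)/(n:ℝ)) ∈ P
    · have hΩ := hPsub hm
      simp only [Set.mem_setOf_eq] at hΩ
      have hab : a ≤ b := by
        have h2 : (a:ℝ)/(n:ℝ) ≤ (b:ℝ)/(n:ℝ) := hΩ.2.1
        have : (a:ℝ) ≤ (b:ℝ) := by
          rwa [div_le_div_iff_of_pos_right hn0] at h2
        exact_mod_cast this
      have hind : P.indicator (fun q : ℝ × ℝ => (q.2 - q.1)^j / (Nat.factorial j : ℝ))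
          ((a:ℝ)/(n:ℝ), (b:ℝ)/(n:ℝ))
          = ((b:ℝ)/(n:ℝ) - (a:ℝ)/(n:ℝ))^j / (Nat.factorial j : ℝ) := by
        rw [Set.indicator_of_mem hm]
      rcases eq_or_lt_of_le hab with rfl | hlt
      · -- diagonal
        rw [if_neg (by simp), if_pos rfl, hind]
        have habs : |((a:ℝ)/(n:ℝ) - (a:ℝ)/(n:ℝ))^j / (Nat.factorial j : ℝ)| ≤ 1 := by
          refine le_trans (abs_f_le (q := ((a:ℝ)/(n:ℝ), (a:ℝ)/(n:ℝ))) (by simp)) ?_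
          rw [div_le_one hfac0]; exact hfac1
        rw [Nat.cast_zero, zero_div, zero_sub, abs_neg, abs_div,
          abs_of_pos (by positivity : (0:ℝ) < (n:ℝ)^2), hA]
        gcongr
      · -- off-diagonal a < b
        rw [if_pos (⟨hm, hlt⟩ : ((a:ℝ)/(n:ℝ), (b:ℝ)/(n:ℝ)) ∈ P ∧ a < b),
          if_neg (show ¬ a = b by omega), hind]
        set d := b - a with hd
        have hd1 : 1 ≤ d := by omega
        have hdn : d ≤ n := by omega
        have hdc : ((b:ℝ)/(n:ℝ) - (a:ℝ)/(n:ℝ)) = (d:ℝ)/(n:ℝ) := by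
          rw [hd]
          push_cast [Nat.cast_sub hab]
          ring
        have hnk : (n:ℝ)^k = (n:ℝ)^j * (n:ℝ)^2 := by rw [hk2, pow_add]
        have key := weight_approx (j := j) hd1 hdn
        have hbd : b - a - 1 = d - 1 := rfl
        rw [hdc, hnk, hbd]
        have hrw : ((d - 1).choose j : ℝ) / ((n:ℝ)^j * (n:ℝ)^2)
            - ((d:ℝ)/(n:ℝ))^j / (Nat.factorial j : ℝ) / (n:ℝ)^2
            = (((d - 1).choose j : ℝ) / (n:ℝ)^j
                - ((d:ℝ)/(n:ℝ))^j / (Nat.factorial j : ℝ)) / (n:ℝ)^2 := by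
          field_simp
        rw [hrw, abs_div, abs_of_pos (by positivity : (0:ℝ) < (n:ℝ)^2), hB]
        calc |((d - 1).choose j : ℝ) / (n:ℝ)^j - ((d:ℝ)/(n:ℝ))^j / (Nat.factorial j : ℝ)| / (n:ℝ)^2
            ≤ ((j*j:ℝ) / ((Nat.factorial j : ℝ) * (n:ℝ))) / (n:ℝ)^2 := by gcongr
          _ = (j*j:ℝ)/((Nat.factorial j : ℝ) * (n:ℝ)^2 * n) := by ring
    · rw [if_neg (by tauto), Set.indicator_of_notMem hm]
      simp only [Nat.cast_zero, zero_div, sub_zero, abs_zero]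
      split <;> [exact hA0; exact hB0]
  refine le_trans (Finset.abs_sum_le_sum_abs _ _)
    (le_trans (Finset.sum_le_sum hterm) ?_)
  rw [Finset.sum_ite, Finset.sum_const, Finset.sum_const, nsmul_eq_mul, nsmul_eq_mul]
  have hc1 : (((F.filter (fun p : ℕ × ℕ => p.1 = p.2))).card : ℝ) ≤ (n:ℝ) + 1 := by
    have hsub : F.filter (fun p : ℕ × ℕ => p.1 = p.2)
        ⊆ (Finset.range (n+1)).image (fun a => (a, a)) := by
      intro p hp
      simp only [Finset.mem_filter, hF, Finset.mem_product, Finset.mem_range] at hp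
      simp only [Finset.mem_image, Finset.mem_range]
      exact ⟨p.1, hp.1.1, Prod.ext rfl hp.2⟩
    have h1 := Finset.card_le_card hsub
    have h2 := Finset.card_image_le (s := Finset.range (n+1)) (f := fun a : ℕ => (a, a))
    rw [Finset.card_range] at h2
    exact_mod_cast le_trans h1 h2
  have hc2 : (((F.filter (fun p : ℕ × ℕ => ¬ p.1 = p.2))).card : ℝ) ≤ ((n:ℝ)+1)^2 := by
    have h1 := Finset.card_le_card (Finset.filter_subset (fun p : ℕ × ℕ => ¬ p.1 = p.2) F)
    have hFc : F.card = (n+1)*(n+1) := by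
      rw [hF, Finset.card_product, Finset.card_range]
    rw [hFc] at h1
    have : ((n:ℝ)+1)^2 = (((n+1)*(n+1) : ℕ) : ℝ) := by push_cast; ring
    rw [this]
    exact_mod_cast h1
  have hnR : (1:ℝ) ≤ (n:ℝ) := by exact_mod_cast hn
  have hn1 : ((n:ℝ)+1) ≤ 2*n := by linarith
  calc ((F.filter (fun p : ℕ × ℕ => p.1 = p.2)).card : ℝ) * A
        + ((F.filter (fun p : ℕ × ℕ => ¬ p.1 = p.2)).card : ℝ) * B
      ≤ (2*(n:ℝ)) * A + (2*(n:ℝ))^2 * B := by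
        apply add_le_add
        · exact mul_le_mul_of_nonneg_right (le_trans hc1 hn1) hA0
        · refine mul_le_mul_of_nonneg_right (le_trans hc2 ?_) hB0
          exact pow_le_pow_left₀ (by linarith) hn1 2
    _ = 4*((j*j) : ℝ)/((Nat.factorial j : ℝ) * n) + 2/(n:ℝ) := by
        rw [hA, hB]; field_simp; ring

lemma abs_pow_sub_pow (j : ℕ) : ∀ u v : ℝ, |u| ≤ 1 → |v| ≤ 1 → |u^j - v^j| ≤ j * |u - v| := by
  induction j with
  | zero => intro u v _ _; simp
  | succ j ih =>
    intro u v hu hv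
    have h : u^(j+1) - v^(j+1) = u*(u^j - v^j) + v^j*(u - v) := by ring
    rw [h]
    have h1 : |u*(u^j - v^j)| ≤ 1 * (j * |u - v|) := by
      rw [abs_mul]
      exact mul_le_mul hu (ih u v hu hv) (abs_nonneg _) zero_le_one
    have h2 : |v^j*(u - v)| ≤ 1 * |u - v| := by
      rw [abs_mul, abs_pow]
      exact mul_le_mul_of_nonneg_right (pow_le_one₀ (abs_nonneg _) hv) (abs_nonneg _)
    calc |u*(u^j - v^j) + v^j*(u - v)| ≤ |u*(u^j - v^j)| + |v^j*(u - v)| := abs_add_le _ _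
      _ ≤ 1*(j*|u-v|) + 1*|u-v| := add_le_add h1 h2
      _ = (↑(j+1)) * |u - v| := by push_cast; ring

lemma riemann_bound (j n : ℕ) (hn : 1 ≤ n) (P : Set (ℝ × ℝ)) (hPm : MeasurableSet P)
    (hPsub : P ⊆ Set.Icc (0:ℝ) 1 ×ˢ Set.Icc (0:ℝ) 1) :
    |(∑ p ∈ (Finset.range (n+1)) ×ˢ (Finset.range (n+1)),
        P.indicator (fun q : ℝ × ℝ => (q.2 - q.1)^j / (Nat.factorial j : ℝ))
          ((p.1:ℝ)/(n:ℝ), (p.2:ℝ)/(n:ℝ))) / (n:ℝ)^2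
      - ∫ q in P, (q.2 - q.1)^j / (Nat.factorial j : ℝ)|
    ≤ 8*(j:ℝ)/((Nat.factorial j : ℝ) * n)
      + (2/(Nat.factorial j : ℝ)) *
        (volume (Metric.cthickening (1/(n:ℝ)) (frontier P))).toReal := by
  have hn0 : (0:ℝ) < n := by exact_mod_cast hn
  have hnR : (1:ℝ) ≤ (n:ℝ) := by exact_mod_cast hn
  have hfac0 : (0:ℝ) < (Nat.factorial j : ℝ) := by exact_mod_cast j.factorial_pos
  set f : ℝ × ℝ → ℝ := fun q => (q.2 - q.1)^j / (Nat.factorial j : ℝ) with hf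
  have hfc : Continuous f := by fun_prop
  set g : ℝ × ℝ → ℝ := P.indicator f with hg
  have hgmeas : Measurable g := hfc.measurable.indicator hPm
  have habs1 : ∀ q : ℝ × ℝ, q ∈ P → |q.2 - q.1| ≤ 1 := by
    intro q hq
    obtain ⟨h1, h2⟩ := hPsub hq
    simp only [Set.mem_Icc] at h1 h2
    rw [abs_le]; constructor <;> linarith [h1.1, h1.2, h2.1, h2.2]
  have hgb : ∀ x, ‖g x‖ ≤ 1/(Nat.factorial j : ℝ) := by
    intro x
    rw [Real.norm_eq_abs, hg]
    by_cases hx : x ∈ P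
    · rw [Set.indicator_of_mem hx]; exact abs_f_le (habs1 x hx)
    · rw [Set.indicator_of_notMem hx]; rw [abs_zero]; positivity
  set Q : ℕ × ℕ → Set (ℝ × ℝ) := fun p =>
    (Set.Ioc (((p.1:ℝ)-1)/(n:ℝ)) ((p.1:ℝ)/(n:ℝ)))
      ×ˢ (Set.Ioc (((p.2:ℝ)-1)/(n:ℝ)) ((p.2:ℝ)/(n:ℝ))) with hQdef
  have hQm : ∀ p, MeasurableSet (Q p) := fun p => measurableSet_Ioc.prod measurableSet_Ioc
  have hlen : ∀ a : ℕ, (a:ℝ)/(n:ℝ) - ((a:ℝ)-1)/(n:ℝ) = 1/(n:ℝ) := by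
    intro a; field_simp; ring
  have hQvol : ∀ p, volume (Q p) = ENNReal.ofReal (1/(n:ℝ)) * ENNReal.ofReal (1/(n:ℝ)) := by
    intro p
    rw [hQdef]
    simp only
    rw [MeasureTheory.Measure.volume_eq_prod, MeasureTheory.Measure.prod_prod,
      Real.volume_Ioc, Real.volume_Ioc, hlen, hlen]
  have hQfin : ∀ p, volume (Q p) ≠ ⊤ := by
    intro p; rw [hQvol p]
    exact ENNReal.mul_ne_top ENNReal.ofReal_ne_top ENNReal.ofReal_ne_top
  have hQlt : ∀ p, volume (Q p) < ⊤ := fun p => lt_top_iff_ne_top.mpr (hQfin p)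
  have hQvol' : ∀ p, (volume (Q p)).toReal = 1/(n:ℝ)^2 := by
    intro p
    rw [hQvol p, ENNReal.toReal_mul, ENNReal.toReal_ofReal (by positivity)]
    ring
  have hint : ∀ p, IntegrableOn g (Q p) := by
    intro p
    exact Measure.integrableOn_of_bounded (hQfin p) hgmeas.aestronglyMeasurable
      (Filter.Eventually.of_forall hgb)
  -- disjointness
  have hIoc : ∀ a b : ℕ, a ≠ b →
      Disjoint (Set.Ioc (((a:ℝ)-1)/(n:ℝ)) ((a:ℝ)/(n:ℝ)))
        (Set.Ioc (((b:ℝ)-1)/(n:ℝ)) ((b:ℝ)/(n:ℝ))) := by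
    intro a b hab
    rw [Set.Ioc_disjoint_Ioc]
    rcases lt_or_gt_of_ne hab with h | h
    · have h1 : (a:ℝ) ≤ (b:ℝ) - 1 := by
        have : (a:ℝ) + 1 ≤ (b:ℝ) := by exact_mod_cast h
        linarith
      refine le_trans (min_le_left _ _) (le_trans ?_ (le_max_right _ _))
      gcongr
    · have h1 : (b:ℝ) ≤ (a:ℝ) - 1 := by
        have : (b:ℝ) + 1 ≤ (a:ℝ) := by exact_mod_cast h
        linarith
      refine le_trans (min_le_right _ _) (le_trans ?_ (le_max_left _ _))
      gcongr
  have hdisj : ∀ p p' : ℕ × ℕ, p ≠ p' → Disjoint (Q p) (Q p') := by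
    intro p p' hpp
    by_cases h1 : p.1 = p'.1
    · have h2 : p.2 ≠ p'.2 := fun h => hpp (Prod.ext h1 h)
      exact Set.Disjoint.set_prod_right (hIoc _ _ h2) _ _
    · exact Set.Disjoint.set_prod_left (hIoc _ _ h1) _ _
  -- corner membership
  have hcorner : ∀ p : ℕ × ℕ, ((p.1:ℝ)/(n:ℝ), (p.2:ℝ)/(n:ℝ)) ∈ Q p := by
    intro p
    constructor <;>
    · constructor
      · apply div_lt_div_of_pos_right (by linarith) hn0
      · exact le_rfl
  -- cover
  have hcover : P ⊆ ⋃ p ∈ (Finset.range (n+1)) ×ˢ (Finset.range (n+1)), Q p := by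
    intro x hx
    obtain ⟨h1, h2⟩ := hPsub hx
    simp only [Set.mem_Icc] at h1 h2
    simp only [Set.mem_iUnion]
    refine ⟨(⌈x.1*(n:ℝ)⌉₊, ⌈x.2*(n:ℝ)⌉₊), ?_, ?_, ?_⟩
    · simp only [Finset.mem_product, Finset.mem_range]
      constructor
      · have : x.1*(n:ℝ) ≤ (n:ℝ) := by nlinarith [h1.1, h1.2]
        have := Nat.ceil_le.mpr (by exact_mod_cast this : x.1*(n:ℝ) ≤ ((n:ℕ):ℝ))
        omega
      · have : x.2*(n:ℝ) ≤ (n:ℝ) := by nlinarith [h2.1, h2.2]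
        have := Nat.ceil_le.mpr (by exact_mod_cast this : x.2*(n:ℝ) ≤ ((n:ℕ):ℝ))
        omega
    · constructor
      · rw [div_lt_iff₀ hn0]
        have := Nat.ceil_lt_add_one (by nlinarith [h1.1] : (0:ℝ) ≤ x.1*(n:ℝ))
        linarith
      · rw [le_div_iff₀ hn0]
        exact Nat.le_ceil _
    · constructor
      · rw [div_lt_iff₀ hn0]
        have := Nat.ceil_lt_add_one (by nlinarith [h2.1] : (0:ℝ) ≤ x.2*(n:ℝ))
        linarith
      · rw [le_div_iff₀ hn0]
        exact Nat.le_ceil _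
  -- decompose integral
  have hsplit : ∫ q in P, f q = ∑ p ∈ (Finset.range (n+1)) ×ˢ (Finset.range (n+1)),
      ∫ q in Q p, g q := by
    rw [← MeasureTheory.integral_biUnion_finset _ (fun p _ => hQm p)
      (fun p _ p' _ hpp => hdisj p p' hpp) (fun p _ => hint p)]
    rw [hg, MeasureTheory.setIntegral_indicator hPm,
      Set.inter_eq_self_of_subset_right hcover]
  rw [hsplit, Finset.sum_div, ← Finset.sum_sub_distrib]
  set F := (Finset.range (n+1)) ×ˢ (Finset.range (n+1)) with hF
  set D := Metric.cthickening (1/(n:ℝ)) (frontier P) with hD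
  set L : ℝ := 2*(j:ℝ)/((Nat.factorial j : ℝ) * n) with hL
  have hL0 : 0 ≤ L := by positivity
  have habs_sub : ∀ a b : ℝ, |a - b| ≤ |a| + |b| := by
    intro a b
    rw [sub_eq_add_neg]
    exact (abs_add_le _ _).trans (by rw [abs_neg])
  have dcoord : ∀ (a : ℕ) (s t : ℝ), s ∈ Set.Ioc (((a:ℝ)-1)/(n:ℝ)) ((a:ℝ)/(n:ℝ)) →
      t ∈ Set.Ioc (((a:ℝ)-1)/(n:ℝ)) ((a:ℝ)/(n:ℝ)) → |s - t| ≤ 1/(n:ℝ) := by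
    intro a s t hs ht
    obtain ⟨hs1, hs2⟩ := hs; obtain ⟨ht1, ht2⟩ := ht
    have hl := hlen a
    rw [abs_le]; constructor <;> linarith
  have hflip : ∀ p : ℕ × ℕ, ∀ x ∈ Q p, ∀ y ∈ Q p, x ∈ P → y ∈ P → |f x - f y| ≤ L := by
    intro p x hx y hy hxP hyP
    have h1 : |(x.2 - x.1)^j - (y.2 - y.1)^j| ≤ (j:ℝ) * |(x.2 - x.1) - (y.2 - y.1)| :=
      abs_pow_sub_pow j _ _ (habs1 x hxP) (habs1 y hyP)
    have h2 : |(x.2 - x.1) - (y.2 - y.1)| ≤ 2/(n:ℝ) := by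
      have d1 := dcoord p.1 x.1 y.1 hx.1 hy.1
      have d2 := dcoord p.2 x.2 y.2 hx.2 hy.2
      have hre : (x.2 - x.1) - (y.2 - y.1) = (x.2 - y.2) - (x.1 - y.1) := by ring
      rw [hre]
      calc |(x.2 - y.2) - (x.1 - y.1)| ≤ |x.2 - y.2| + |x.1 - y.1| := habs_sub _ _
        _ ≤ 1/(n:ℝ) + 1/(n:ℝ) := add_le_add d2 d1
        _ = 2/(n:ℝ) := by ring
    have hfx : f x - f y = ((x.2 - x.1)^j - (y.2 - y.1)^j) / (Nat.factorial j : ℝ) := by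
      rw [hf]; ring
    rw [hfx, abs_div, abs_of_pos hfac0, hL]
    rw [div_le_div_iff₀ (by positivity) (by positivity)]
    calc |(x.2 - x.1)^j - (y.2 - y.1)^j| * ((Nat.factorial j : ℝ) * n)
        ≤ ((j:ℝ) * (2/(n:ℝ))) * ((Nat.factorial j : ℝ) * n) := by
          apply mul_le_mul_of_nonneg_right (le_trans h1 ?_) (by positivity)
          exact mul_le_mul_of_nonneg_left h2 (by positivity)
      _ = 2*(j:ℝ) * (Nat.factorial j : ℝ) := by field_simp
  have hterm : ∀ p ∈ F, |g ((p.1:ℝ)/(n:ℝ), (p.2:ℝ)/(n:ℝ))/(n:ℝ)^2 - ∫ q in Q p, g q|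
      ≤ (if (Q p ∩ frontier P).Nonempty
          then (2/(Nat.factorial j:ℝ)) * (volume (Q p)).toReal
          else L * (volume (Q p)).toReal) := by
    intro p _
    set c := ((p.1:ℝ)/(n:ℝ), (p.2:ℝ)/(n:ℝ)) with hc
    have hcQ : c ∈ Q p := hcorner p
    by_cases hfr : (Q p ∩ frontier P).Nonempty
    · rw [if_pos hfr]
      have h1 : |g c/(n:ℝ)^2| ≤ (1/(Nat.factorial j:ℝ)) * (volume (Q p)).toReal := by
        rw [hQvol' p, abs_div, abs_of_pos (by positivity : (0:ℝ) < (n:ℝ)^2)]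
        rw [div_eq_mul_one_div]
        apply mul_le_mul_of_nonneg_right ?_ (by positivity)
        rw [← Real.norm_eq_abs]
        exact hgb c
      have h2 : |∫ q in Q p, g q| ≤ (1/(Nat.factorial j:ℝ)) * (volume (Q p)).toReal := by
        rw [← Real.norm_eq_abs]
        exact norm_setIntegral_le_of_norm_le_const (hQlt p) (fun x _ => hgb x)
      calc |g c/(n:ℝ)^2 - ∫ q in Q p, g q| ≤ |g c/(n:ℝ)^2| + |∫ q in Q p, g q| := habs_sub _ _
        _ ≤ (1/(Nat.factorial j:ℝ)) * (volume (Q p)).toReal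
            + (1/(Nat.factorial j:ℝ)) * (volume (Q p)).toReal := add_le_add h1 h2
        _ = (2/(Nat.factorial j:ℝ)) * (volume (Q p)).toReal := by ring
    · rw [if_neg hfr]
      have hQconv : Convex ℝ (Q p) := (convex_Ioc _ _).prod (convex_Ioc _ _)
      have hQsub2 : Q p ⊆ interior P ∪ (closure P)ᶜ := by
        intro x hx
        by_cases hxi : x ∈ interior P
        · exact Or.inl hxi
        · refine Or.inr ?_
          intro hxc
          exact hfr ⟨x, hx, hxc, hxi⟩
      have hdisj2 : Disjoint (interior P) (closure P)ᶜ :=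
        Set.disjoint_left.mpr (fun x hxi hxc => hxc (interior_subset_closure hxi))
      rcases IsPreconnected.subset_or_subset isOpen_interior isClosed_closure.isOpen_compl
          hdisj2 hQsub2 hQconv.isPreconnected with hsub | hsub
      · have hQP : Q p ⊆ P := hsub.trans interior_subset
        have hgc : g c = f c := Set.indicator_of_mem (hQP hcQ) f
        have hEq : Set.EqOn g f (Q p) := fun x hx => Set.indicator_of_mem (hQP hx) f
        rw [setIntegral_congr_fun (hQm p) hEq, hgc]
        have hconst : f c/(n:ℝ)^2 = ∫ _x in Q p, f c := by
          rw [setIntegral_const, measureReal_def, hQvol' p, smul_eq_mul]; ring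
        have hintf : IntegrableOn f (Q p) := by
          apply Measure.integrableOn_of_bounded (hQfin p) hfc.measurable.aestronglyMeasurable
          apply ae_restrict_of_forall_mem (hQm p)
          intro x hx
          rw [Real.norm_eq_abs]
          exact abs_f_le (habs1 x (hQP hx))
        rw [hconst, ← integral_sub (integrableOn_const (C := f c) (hQfin p)) hintf]
        rw [← Real.norm_eq_abs]
        apply norm_setIntegral_le_of_norm_le_const (hQlt p)
        intro x hx
        rw [Real.norm_eq_abs]
        exact hflip p c hcQ x hx (hQP hcQ) (hQP hx)
      · have hout : ∀ x ∈ Q p, g x = 0 := by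
          intro x hx
          apply Set.indicator_of_notMem
          intro hxP
          exact (hsub hx) (subset_closure hxP)
        have hz : ∫ q in Q p, g q = 0 := by
          rw [setIntegral_congr_fun (hQm p) (fun x hx => hout x hx)]
          exact integral_zero _ _
        rw [hz, hout c hcQ]
        simp only [zero_div, sub_zero, abs_zero]
        positivity
  refine le_trans (Finset.abs_sum_le_sum_abs _ _) (le_trans (Finset.sum_le_sum hterm) ?_)
  rw [Finset.sum_ite]
  have hpart1 : ∑ p ∈ F.filter (fun p => (Q p ∩ frontier P).Nonempty),
      (2/(Nat.factorial j:ℝ)) * (volume (Q p)).toReal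
      ≤ (2/(Nat.factorial j:ℝ)) * (volume D).toReal := by
    rw [← Finset.mul_sum]
    apply mul_le_mul_of_nonneg_left ?_ (by positivity)
    set F₁ := F.filter (fun p => (Q p ∩ frontier P).Nonempty) with hF₁
    have hPbd : Bornology.IsBounded P :=
      ((Metric.isBounded_Icc (0:ℝ) 1).prod (Metric.isBounded_Icc (0:ℝ) 1)).subset hPsub
    have hDfin : volume D ≠ ⊤ := by
      apply lt_top_iff_ne_top.mp
      apply Bornology.IsBounded.measure_lt_top
      exact (hPbd.closure.subset frontier_subset_closure).cthickening
    have hsum : ∑ p ∈ F₁, volume (Q p) = volume (⋃ p ∈ F₁, Q p) :=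
      (measure_biUnion_finset (fun p _ p' _ h => hdisj p p' h) (fun p _ => hQm p)).symm
    have hUsub : (⋃ p ∈ F₁, Q p) ⊆ D := by
      intro x hx
      simp only [Set.mem_iUnion] at hx
      obtain ⟨p, hpF₁, hxQ⟩ := hx
      rw [hF₁, Finset.mem_filter] at hpF₁
      obtain ⟨z, hzQ, hzfr⟩ := hpF₁.2
      apply Metric.mem_cthickening_of_dist_le x z _ _ hzfr
      rw [Prod.dist_eq]
      apply max_le
      · rw [Real.dist_eq]; exact dcoord p.1 x.1 z.1 hxQ.1 hzQ.1
      · rw [Real.dist_eq]; exact dcoord p.2 x.2 z.2 hxQ.2 hzQ.2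
    calc ∑ p ∈ F₁, (volume (Q p)).toReal = (∑ p ∈ F₁, volume (Q p)).toReal :=
        (ENNReal.toReal_sum (fun p _ => hQfin p)).symm
      _ = (volume (⋃ p ∈ F₁, Q p)).toReal := by rw [hsum]
      _ ≤ (volume D).toReal := ENNReal.toReal_mono hDfin (measure_mono hUsub)
  have hpart2 : ∑ p ∈ F.filter (fun p => ¬(Q p ∩ frontier P).Nonempty),
      L * (volume (Q p)).toReal ≤ 8*(j:ℝ)/((Nat.factorial j : ℝ) * n) := by
    have hcongr : ∀ p ∈ F.filter (fun p => ¬(Q p ∩ frontier P).Nonempty),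
        L * (volume (Q p)).toReal = L * (1/(n:ℝ)^2) := by
      intro p _; rw [hQvol' p]
    rw [Finset.sum_congr rfl hcongr, Finset.sum_const, nsmul_eq_mul]
    have hcard : ((F.filter (fun p => ¬(Q p ∩ frontier P).Nonempty)).card : ℝ) ≤ ((n:ℝ)+1)^2 := by
      have h1 := Finset.card_le_card
        (Finset.filter_subset (fun p => ¬(Q p ∩ frontier P).Nonempty) F)
      have hFc : F.card = (n+1)*(n+1) := by
        rw [hF, Finset.card_product, Finset.card_range]
      rw [hFc] at h1
      have h2 : ((n:ℝ)+1)^2 = (((n+1)*(n+1) : ℕ) : ℝ) := by push_cast; ring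
      rw [h2]
      exact_mod_cast h1
    have hn1 : ((n:ℝ)+1)^2 ≤ (2*(n:ℝ))^2 := by nlinarith
    calc ((F.filter (fun p => ¬(Q p ∩ frontier P).Nonempty)).card : ℝ) * (L * (1/(n:ℝ)^2))
        ≤ (2*(n:ℝ))^2 * (L * (1/(n:ℝ)^2)) := by
          apply mul_le_mul_of_nonneg_right (le_trans hcard hn1) (by positivity)
      _ = 4 * L := by field_simp; ring
      _ = 8*(j:ℝ)/((Nat.factorial j : ℝ) * n) := by rw [hL]; ring
  linarith [hpart1, hpart2]

lemma omega_convex : Convex ℝ {p : ℝ × ℝ | 0 ≤ p.1 ∧ p.1 ≤ p.2 ∧ p.2 ≤ 1} := by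
  rintro p hp q hq a b ha hb hab
  simp only [Set.mem_setOf_eq] at hp hq ⊢
  have h1 : (a • p + b • q).1 = a * p.1 + b * q.1 := rfl
  have h2 : (a • p + b • q).2 = a * p.2 + b * q.2 := rfl
  rw [h1, h2]
  refine ⟨by nlinarith [hp.1, hq.1], by nlinarith [hp.2.1, hq.2.1], ?_⟩
  nlinarith [hp.2.2, hq.2.2]


/-- Let `k ≥ 2` be fixed, `Ω = {(x,y) : 0 ≤ x ≤ y ≤ 1}`, and let `P ⊆ Ω` be the convex
hull of a finite set of points of `Ω`. With
`V_{n,k}(P) = {X ⊆ {0,…,n} : |X| = k, (min X / n, max X / n) ∈ P}`, we have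
`|V_{n,k}(P)| / n^k → (1/(k-2)!) ∬_P (y-x)^{k-2} dx dy` as `n → ∞`. -/
theorem card_Vnk_polygon_asymp (k : ℕ) (hk : 2 ≤ k) (S : Finset (ℝ × ℝ))
    (hS : (S : Set (ℝ × ℝ)) ⊆ {p : ℝ × ℝ | 0 ≤ p.1 ∧ p.1 ≤ p.2 ∧ p.2 ≤ 1}) :
    Filter.Tendsto
      (fun n : ℕ =>
        (Nat.card {X : Finset ℕ | X ⊆ Finset.range (n + 1) ∧ X.card = k ∧
          ((fmin X : ℝ) / (n : ℝ), (fmax X : ℝ) / (n : ℝ)) ∈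
            convexHull ℝ (S : Set (ℝ × ℝ))} : ℝ) / (n : ℝ) ^ k)
      Filter.atTop
      (nhds ((1 / (Nat.factorial (k - 2) : ℝ)) *
        ∫ p in convexHull ℝ (S : Set (ℝ × ℝ)), (p.2 - p.1) ^ (k - 2))) := by
  classical
  set P := convexHull ℝ (S : Set (ℝ × ℝ)) with hP
  set j := k - 2 with hj
  have hPΩ : P ⊆ {p : ℝ × ℝ | 0 ≤ p.1 ∧ p.1 ≤ p.2 ∧ p.2 ≤ 1} :=
    convexHull_min hS omega_convex
  have hPIcc : P ⊆ Set.Icc (0:ℝ) 1 ×ˢ Set.Icc (0:ℝ) 1 := by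
    intro q hq
    obtain ⟨h1, h2, h3⟩ := hPΩ hq
    exact ⟨⟨h1, by linarith⟩, ⟨by linarith, h3⟩⟩
  have hPcpt : IsCompact P := S.finite_toSet.isCompact_convexHull ℝ
  have hPm : MeasurableSet P := hPcpt.isClosed.measurableSet
  have hPconv : Convex ℝ P := convex_convexHull ℝ _
  have hfrcpt : IsCompact (frontier P) :=
    hPcpt.of_isClosed_subset isClosed_frontier hPcpt.isClosed.frontier_subset
  have hfr0 : volume (frontier P) = 0 := Convex.addHaar_frontier (volume : Measure (ℝ × ℝ)) hPconv
  have hcount : ∀ n : ℕ, (Nat.card {X : Finset ℕ | X ⊆ Finset.range (n + 1) ∧ X.card = k ∧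
      ((fmin X : ℝ) / (n : ℝ), (fmax X : ℝ) / (n : ℝ)) ∈ P} : ℝ)
      = (((Finset.range (n+1)).powerset.filter
          (fun X : Finset ℕ => X.card = k ∧
            ((fmin X : ℝ)/(n:ℝ), (fmax X : ℝ)/(n:ℝ)) ∈ P)).card : ℝ) := by
    intro n
    congr 1
    have hset : {X : Finset ℕ | X ⊆ Finset.range (n + 1) ∧ X.card = k ∧
        ((fmin X : ℝ) / (n : ℝ), (fmax X : ℝ) / (n : ℝ)) ∈ P}
        = ↑((Finset.range (n+1)).powerset.filter
          (fun X : Finset ℕ => X.card = k ∧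
            ((fmin X : ℝ)/(n:ℝ), (fmax X : ℝ)/(n:ℝ)) ∈ P)) := by
      ext X
      simp only [Set.mem_setOf_eq, Finset.coe_filter, Finset.mem_powerset]
    rw [hset, ← Set.ncard_coe_finset, Nat.card_coe_set_eq]
  have hI : (1 / (Nat.factorial j : ℝ)) * ∫ p in P, (p.2 - p.1) ^ j
      = ∫ q in P, (q.2 - q.1)^j / (Nat.factorial j : ℝ) := by
    rw [MeasureTheory.integral_div]
    ring
  rw [hI]
  simp only [hcount]
  rw [← tendsto_sub_nhds_zero_iff]
  apply squeeze_zero_norm' (a := fun n : ℕ =>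
    (4*((j*j):ℝ)/((Nat.factorial j : ℝ) * n) + 2/(n:ℝ))
    + (8*(j:ℝ)/((Nat.factorial j : ℝ) * n)
      + (2/(Nat.factorial j : ℝ)) *
        (volume (Metric.cthickening (1/(n:ℝ)) (frontier P))).toReal))
  · filter_upwards [Filter.eventually_ge_atTop 1] with n hn
    rw [Real.norm_eq_abs]
    have h1 := count_approx k n hk hn P hPΩ
    have hjc : ((k:ℝ) - 2) = (j:ℝ) := by rw [hj, Nat.cast_sub hk]; norm_num
    rw [hjc] at h1
    simp only [← hj] at h1
    have h2 := riemann_bound j n hn P hPm hPIcc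
    calc |(((Finset.range (n+1)).powerset.filter
          (fun X : Finset ℕ => X.card = k ∧
            ((fmin X : ℝ)/(n:ℝ), (fmax X : ℝ)/(n:ℝ)) ∈ P)).card : ℝ) / (n:ℝ)^k
          - ∫ q in P, (q.2 - q.1)^j / (Nat.factorial j : ℝ)|
        ≤ |(((Finset.range (n+1)).powerset.filter
            (fun X : Finset ℕ => X.card = k ∧
              ((fmin X : ℝ)/(n:ℝ), (fmax X : ℝ)/(n:ℝ)) ∈ P)).card : ℝ) / (n:ℝ)^k
            - (∑ p ∈ (Finset.range (n+1)) ×ˢ (Finset.range (n+1)),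
                P.indicator (fun q : ℝ × ℝ => (q.2 - q.1)^j / (Nat.factorial j : ℝ))
                  ((p.1:ℝ)/(n:ℝ), (p.2:ℝ)/(n:ℝ))) / (n:ℝ)^2|
          + |(∑ p ∈ (Finset.range (n+1)) ×ˢ (Finset.range (n+1)),
                P.indicator (fun q : ℝ × ℝ => (q.2 - q.1)^j / (Nat.factorial j : ℝ))
                  ((p.1:ℝ)/(n:ℝ), (p.2:ℝ)/(n:ℝ))) / (n:ℝ)^2
            - ∫ q in P, (q.2 - q.1)^j / (Nat.factorial j : ℝ)| := abs_sub_le _ _ _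
      _ ≤ (4*((j*j):ℝ)/((Nat.factorial j : ℝ) * n) + 2/(n:ℝ))
          + (8*(j:ℝ)/((Nat.factorial j : ℝ) * n)
            + (2/(Nat.factorial j : ℝ)) *
              (volume (Metric.cthickening (1/(n:ℝ)) (frontier P))).toReal) :=
        add_le_add h1 h2
  · have h0 : Filter.Tendsto (fun n : ℕ => (1:ℝ)/n) Filter.atTop (nhds 0) :=
      tendsto_one_div_atTop_nhds_zero_nat
    have hb1 : Filter.Tendsto (fun n : ℕ => 4*((j*j):ℝ)/((Nat.factorial j : ℝ) * n))
        Filter.atTop (nhds 0) := by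
      have heq : (fun n : ℕ => 4*((j*j):ℝ)/((Nat.factorial j : ℝ) * n))
          = fun n : ℕ => (4*((j*j):ℝ)/(Nat.factorial j : ℝ)) * ((1:ℝ)/n) := by
        funext n
        rw [← div_div, div_eq_mul_one_div (4*((j*j):ℝ)/(Nat.factorial j : ℝ))]
      rw [heq]
      simpa using h0.const_mul (4*((j*j):ℝ)/(Nat.factorial j : ℝ))
    have hb2 : Filter.Tendsto (fun n : ℕ => 2/(n:ℝ)) Filter.atTop (nhds 0) := by
      have heq : (fun n : ℕ => 2/(n:ℝ)) = fun n : ℕ => (2:ℝ) * ((1:ℝ)/n) := by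
        funext n
        rw [div_eq_mul_one_div]
      rw [heq]
      simpa using h0.const_mul (2:ℝ)
    have hb3 : Filter.Tendsto (fun n : ℕ => 8*(j:ℝ)/((Nat.factorial j : ℝ) * n))
        Filter.atTop (nhds 0) := by
      have heq : (fun n : ℕ => 8*(j:ℝ)/((Nat.factorial j : ℝ) * n))
          = fun n : ℕ => (8*(j:ℝ)/(Nat.factorial j : ℝ)) * ((1:ℝ)/n) := by
        funext n
        rw [← div_div, div_eq_mul_one_div (8*(j:ℝ)/(Nat.factorial j : ℝ))]
      rw [heq]
      simpa using h0.const_mul (8*(j:ℝ)/(Nat.factorial j : ℝ))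
    have hthick : Filter.Tendsto
        (fun n : ℕ => (volume (Metric.cthickening (1/(n:ℝ)) (frontier P))).toReal)
        Filter.atTop (nhds 0) := by
      have h2 := (tendsto_measure_cthickening_of_isCompact (μ := volume) hfrcpt).comp h0
      rw [hfr0] at h2
      have h3 := (ENNReal.tendsto_toReal (by simp : (0:ℝ≥0∞) ≠ ⊤)).comp h2
      exact h3
    have hb4 := hthick.const_mul (2/(Nat.factorial j : ℝ))
    rw [mul_zero] at hb4
    have := (hb1.add hb2).add (hb3.add hb4)
    simpa using this
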